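/- The Horn locus equals the image of Z_Horn under the map X ↦ XXᵀ. Precisely: a symmetric 5×5 matrix A is completely positive, positive definite, has all entries strictly positive, and satisfies trace(Aᵀ · D H D) = 0 for some diagonal matrix D with strictly positive diagonal entries, if and only if A = XXᵀ for some X ∈ Z_Horn, where Z_Horn is the set of matrices of the form diag(d₁,…,d₅) · B(y) · diag(z₁,…,z₅) with all d_i, y_i, z_i strictly positive and B(y) the 5×5 matrix with rows (1, 0, 0, y₄, y₅+1), (y₁+1, 1, 0, 0, y₅), (y₁, y₂+1, 1, 0, 0), (0, y₂, y₃+1, 1, 0), (0, 0, y₃, y₄+1, 1). -/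

import Mathlib

open Matrix

/-- The Horn matrix. -/
def Horn : Matrix (Fin 5) (Fin 5) ℝ :=
  !![1, -1,  1,  1, -1;
    -1,  1, -1,  1,  1;
     1, -1,  1, -1,  1;
     1,  1, -1,  1, -1;
    -1,  1,  1, -1,  1]

/-- The matrix `B(y)` from the parametrization of the Horn locus
(with `y₁ = y 0, …, y₅ = y 4`). -/
def Bmat (y : Fin 5 → ℝ) : Matrix (Fin 5) (Fin 5) ℝ :=
  !![1, 0, 0, y 3, y 4 + 1;
     y 0 + 1, 1, 0, 0, y 4;
     y 0, y 1 + 1, 1, 0, 0;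
     0, y 1, y 2 + 1, 1, 0;
     0, 0, y 2, y 3 + 1, 1]

/-- The variety `Z_Horn` of matrices `diag(d) · B(y) · diag(z)` with positive parameters. -/
def ZHorn : Set (Matrix (Fin 5) (Fin 5) ℝ) :=
  {X | ∃ d y z : Fin 5 → ℝ, (∀ i, 0 < d i) ∧ (∀ i, 0 < y i) ∧ (∀ i, 0 < z i) ∧
    X = diagonal d * Bmat y * diagonal z}

section Aux

def uvec (j l : Fin 5) : ℝ := if l = j ∨ l = j + 1 then 1 else 0

def Qform (v : Fin 5 → ℝ) : ℝ := ∑ i, ∑ j, v i * Horn i j * v j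
lemma Qexpand (v : Fin 5 → ℝ) : Qform v =
    (v 0)^2 + (v 1)^2 + (v 2)^2 + (v 3)^2 + (v 4)^2
    - 2*(v 0 * v 1 + v 1 * v 2 + v 2 * v 3 + v 3 * v 4 + v 4 * v 0)
    + 2*(v 0 * v 2 + v 1 * v 3 + v 2 * v 4 + v 3 * v 0 + v 4 * v 1) := by
  simp [Qform, Horn, Fin.sum_univ_five, Matrix.vecHead, Matrix.vecTail]
  ring

lemma Qnonneg (v : Fin 5 → ℝ) (hv : ∀ i, 0 ≤ v i) : 0 ≤ Qform v := by
  rw [Qexpand]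
  rcases le_or_gt (v 4) (v 3) with h | h
  · nlinarith [sq_nonneg (v 0 - v 1 + v 2 - v 3 + v 4), mul_nonneg (hv 1) (hv 4),
      mul_nonneg (hv 0) (sub_nonneg.2 h)]
  rcases le_or_gt (v 0) (v 4) with h1 | h1
  · nlinarith [sq_nonneg (v 1 - v 2 + v 3 - v 4 + v 0), mul_nonneg (hv 2) (hv 0),
      mul_nonneg (hv 1) (sub_nonneg.2 h1)]
  rcases le_or_gt (v 1) (v 0) with h2 | h2
  · nlinarith [sq_nonneg (v 2 - v 3 + v 4 - v 0 + v 1), mul_nonneg (hv 3) (hv 1),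
      mul_nonneg (hv 2) (sub_nonneg.2 h2)]
  rcases le_or_gt (v 2) (v 1) with h3 | h3
  · nlinarith [sq_nonneg (v 3 - v 4 + v 0 - v 1 + v 2), mul_nonneg (hv 4) (hv 2),
      mul_nonneg (hv 3) (sub_nonneg.2 h3)]
  rcases le_or_gt (v 3) (v 2) with h4 | h4
  · nlinarith [sq_nonneg (v 4 - v 0 + v 1 - v 2 + v 3), mul_nonneg (hv 0) (hv 3),
      mul_nonneg (hv 4) (sub_nonneg.2 h4)]
  linarith

lemma exists_zero (v : Fin 5 → ℝ) (hv : ∀ i, 0 ≤ v i) (hQ : Qform v = 0) :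
    ∃ j : Fin 5, v j = 0 := by
  by_contra hc
  push_neg at hc
  have hp : ∀ i, 0 < v i := fun i => lt_of_le_of_ne (hv i) (Ne.symm (hc i))
  rw [Qexpand] at hQ
  rcases le_or_gt (v 4) (v 3) with h | h
  · nlinarith [sq_nonneg (v 0 - v 1 + v 2 - v 3 + v 4), mul_pos (hp 1) (hp 4),
      mul_nonneg (hv 0) (sub_nonneg.2 h)]
  rcases le_or_gt (v 0) (v 4) with h1 | h1
  · nlinarith [sq_nonneg (v 1 - v 2 + v 3 - v 4 + v 0), mul_pos (hp 2) (hp 0),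
      mul_nonneg (hv 1) (sub_nonneg.2 h1)]
  rcases le_or_gt (v 1) (v 0) with h2 | h2
  · nlinarith [sq_nonneg (v 2 - v 3 + v 4 - v 0 + v 1), mul_pos (hp 3) (hp 1),
      mul_nonneg (hv 2) (sub_nonneg.2 h2)]
  rcases le_or_gt (v 2) (v 1) with h3 | h3
  · nlinarith [sq_nonneg (v 3 - v 4 + v 0 - v 1 + v 2), mul_pos (hp 4) (hp 2),
      mul_nonneg (hv 3) (sub_nonneg.2 h3)]
  rcases le_or_gt (v 3) (v 2) with h4 | h4
  · nlinarith [sq_nonneg (v 4 - v 0 + v 1 - v 2 + v 3), mul_pos (hp 0) (hp 3),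
      mul_nonneg (hv 4) (sub_nonneg.2 h4)]
  linarith

/-- core zero-structure with last coordinate zero -/
lemma core (a b c e : ℝ) (ha : 0 ≤ a) (hb : 0 ≤ b) (hc : 0 ≤ c) (he : 0 ≤ e)
    (hQ : a^2+b^2+c^2+e^2 - 2*(a*b+b*c+c*e) + 2*(a*c+b*e+a*e) = 0) :
    (e = 0 ∧ b = a + c) ∨ (a = 0 ∧ c = b + e) := by
  rcases le_or_gt c (a + b) with h | h
  · left
    constructor
    · nlinarith [sq_nonneg (a - b + c), mul_nonneg he (sub_nonneg.2 h)]
    · nlinarith [sq_nonneg (a - b + c), mul_nonneg he (sub_nonneg.2 h), sq_nonneg e]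
  · right
    constructor
    · nlinarith [sq_nonneg (b - c + e), mul_nonneg ha (by linarith : (0:ℝ) ≤ c + e - b)]
    · nlinarith [sq_nonneg (b - c + e), mul_nonneg ha (by linarith : (0:ℝ) ≤ c + e - b), sq_nonneg a]

lemma classify (v : Fin 5 → ℝ) (hv : ∀ i, 0 ≤ v i) (hQ : Qform v = 0) :
    ∃ i : Fin 5, ∃ α β : ℝ, 0 ≤ α ∧ 0 ≤ β ∧ ∀ l, v l = α * uvec i l + β * uvec (i+1) l := by
  obtain ⟨j, hj⟩ := exists_zero v hv hQ
  rw [Qexpand] at hQ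
  fin_cases j
  · replace hj : v 0 = 0 := hj
    rcases core (v 1) (v 2) (v 3) (v 4) (hv 1) (hv 2) (hv 3) (hv 4)
      (by linear_combination hQ - (v 0 - 2*(v 1) + 2*(v 2) + 2*(v 3) - 2*(v 4))*hj) with ⟨h1, h2⟩ | ⟨h1, h2⟩
    · exact ⟨1, v 1, v 3, hv 1, hv 3, by intro l; fin_cases l <;> simp [uvec] <;> linarith⟩
    · exact ⟨2, v 2, v 4, hv 2, hv 4, by intro l; fin_cases l <;> simp [uvec] <;> linarith⟩
  · replace hj : v 1 = 0 := hj
    rcases core (v 2) (v 3) (v 4) (v 0) (hv 2) (hv 3) (hv 4) (hv 0)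
      (by linear_combination hQ - (v 1 - 2*(v 2) + 2*(v 3) + 2*(v 4) - 2*(v 0))*hj) with ⟨h1, h2⟩ | ⟨h1, h2⟩
    · exact ⟨2, v 2, v 4, hv 2, hv 4, by intro l; fin_cases l <;> simp [uvec] <;> linarith⟩
    · exact ⟨3, v 3, v 0, hv 3, hv 0, by intro l; fin_cases l <;> simp [uvec] <;> linarith⟩
  · replace hj : v 2 = 0 := hj
    rcases core (v 3) (v 4) (v 0) (v 1) (hv 3) (hv 4) (hv 0) (hv 1)
      (by linear_combination hQ - (v 2 - 2*(v 3) + 2*(v 4) + 2*(v 0) - 2*(v 1))*hj) with ⟨h1, h2⟩ | ⟨h1, h2⟩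
    · exact ⟨3, v 3, v 0, hv 3, hv 0, by intro l; fin_cases l <;> simp [uvec] <;> linarith⟩
    · exact ⟨4, v 4, v 1, hv 4, hv 1, by intro l; fin_cases l <;> simp [uvec] <;> linarith⟩
  · replace hj : v 3 = 0 := hj
    rcases core (v 4) (v 0) (v 1) (v 2) (hv 4) (hv 0) (hv 1) (hv 2)
      (by linear_combination hQ - (v 3 - 2*(v 4) + 2*(v 0) + 2*(v 1) - 2*(v 2))*hj) with ⟨h1, h2⟩ | ⟨h1, h2⟩
    · exact ⟨4, v 4, v 1, hv 4, hv 1, by intro l; fin_cases l <;> simp [uvec] <;> linarith⟩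
    · exact ⟨0, v 0, v 2, hv 0, hv 2, by intro l; fin_cases l <;> simp [uvec] <;> linarith⟩
  · replace hj : v 4 = 0 := hj
    rcases core (v 0) (v 1) (v 2) (v 3) (hv 0) (hv 1) (hv 2) (hv 3)
      (by linear_combination hQ - (v 4 - 2*(v 0) + 2*(v 1) + 2*(v 2) - 2*(v 3))*hj) with ⟨h1, h2⟩ | ⟨h1, h2⟩
    · exact ⟨0, v 0, v 2, hv 0, hv 2, by intro l; fin_cases l <;> simp [uvec] <;> linarith⟩
    · exact ⟨1, v 1, v 3, hv 1, hv 3, by intro l; fin_cases l <;> simp [uvec] <;> linarith⟩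

lemma stepaux (pj rj qj pn x : ℝ) (hpj : 0 < pj) (hrj : 0 < rj)
    (hcs : qj^2 ≤ pj * rj) (hx : pj ≤ x) :
    pn ≤ pn + rj - qj^2 / x ∧ pn + rj - qj^2 / x ≤ pn + rj := by
  have hx0 : 0 < x := lt_of_lt_of_le hpj hx
  have h1 : qj^2 / x ≤ qj^2 / pj := by gcongr
  have h2 : qj^2 / pj ≤ rj := by rw [div_le_iff₀ hpj]; nlinarith
  have h3 : 0 ≤ qj^2 / x := by positivity
  exact ⟨by linarith, by linarith⟩

lemma exists_c (p r q : Fin 5 → ℝ) (hp : ∀ j, 0 < p j) (hr : ∀ j, 0 < r j)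
    (hcs : ∀ j, (q j)^2 ≤ p j * r j) :
    ∃ c : Fin 5 → ℝ, (∀ j, 0 < c j) ∧
      (∀ j, c (j+1) = p (j+1) + r j - (q j)^2 / c j) := by
  set lo := p 0 with hlo
  set hi := p 0 + r 4 with hhi
  have hlohi : lo ≤ hi := by have := (hr 4).le; simp [hlo, hhi]; linarith
  set g1 : ℝ → ℝ := fun c => p 1 + r 0 - (q 0)^2 / c with hg1
  set g2 : ℝ → ℝ := fun c => p 2 + r 1 - (q 1)^2 / g1 c with hg2
  set g3 : ℝ → ℝ := fun c => p 3 + r 2 - (q 2)^2 / g2 c with hg3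
  set g4 : ℝ → ℝ := fun c => p 4 + r 3 - (q 3)^2 / g3 c with hg4
  set g5 : ℝ → ℝ := fun c => p 0 + r 4 - (q 4)^2 / g4 c with hg5
  have b1 : ∀ x, lo ≤ x → p 1 ≤ g1 x ∧ g1 x ≤ p 1 + r 0 := fun x hx =>
    stepaux (p 0) (r 0) (q 0) (p 1) x (hp 0) (hr 0) (hcs 0) hx
  have b2 : ∀ x, lo ≤ x → p 2 ≤ g2 x ∧ g2 x ≤ p 2 + r 1 := fun x hx =>
    stepaux (p 1) (r 1) (q 1) (p 2) (g1 x) (hp 1) (hr 1) (hcs 1) (b1 x hx).1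
  have b3 : ∀ x, lo ≤ x → p 3 ≤ g3 x ∧ g3 x ≤ p 3 + r 2 := fun x hx =>
    stepaux (p 2) (r 2) (q 2) (p 3) (g2 x) (hp 2) (hr 2) (hcs 2) (b2 x hx).1
  have b4 : ∀ x, lo ≤ x → p 4 ≤ g4 x ∧ g4 x ≤ p 4 + r 3 := fun x hx =>
    stepaux (p 3) (r 3) (q 3) (p 4) (g3 x) (hp 3) (hr 3) (hcs 3) (b3 x hx).1
  have b5 : ∀ x, lo ≤ x → p 0 ≤ g5 x ∧ g5 x ≤ p 0 + r 4 := fun x hx =>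
    stepaux (p 4) (r 4) (q 4) (p 0) (g4 x) (hp 4) (hr 4) (hcs 4) (b4 x hx).1
  -- continuity on Icc lo hi
  have hc1 : ContinuousOn g1 (Set.Icc lo hi) := by
    apply continuousOn_const.sub
    exact continuousOn_const.div continuousOn_id
      (fun x hx => ne_of_gt (lt_of_lt_of_le (hp 0) hx.1))
  have hc2 : ContinuousOn g2 (Set.Icc lo hi) := by
    apply continuousOn_const.sub
    exact continuousOn_const.div hc1
      (fun x hx => ne_of_gt (lt_of_lt_of_le (hp 1) (b1 x hx.1).1))
  have hc3 : ContinuousOn g3 (Set.Icc lo hi) := by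
    apply continuousOn_const.sub
    exact continuousOn_const.div hc2
      (fun x hx => ne_of_gt (lt_of_lt_of_le (hp 2) (b2 x hx.1).1))
  have hc4 : ContinuousOn g4 (Set.Icc lo hi) := by
    apply continuousOn_const.sub
    exact continuousOn_const.div hc3
      (fun x hx => ne_of_gt (lt_of_lt_of_le (hp 3) (b3 x hx.1).1))
  have hc5 : ContinuousOn g5 (Set.Icc lo hi) := by
    apply continuousOn_const.sub
    exact continuousOn_const.div hc4
      (fun x hx => ne_of_gt (lt_of_lt_of_le (hp 4) (b4 x hx.1).1))
  set h : ℝ → ℝ := fun c => g5 c - c with hh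
  have hch : ContinuousOn h (Set.Icc lo hi) := hc5.sub continuousOn_id
  have hhlo : 0 ≤ h lo := by
    have := (b5 lo le_rfl).1
    simp only [hh]; linarith
  have hhhi : h hi ≤ 0 := by
    have h4 : 0 < g4 hi := lt_of_lt_of_le (hp 4) (b4 hi hlohi).1
    have : 0 < (q 4)^2 / g4 hi ∨ (q 4)^2 / g4 hi = 0 := by
      rcases eq_or_lt_of_le (div_nonneg (sq_nonneg (q 4)) h4.le) with h' | h'
      · right; exact h'.symm
      · left; exact h'
    have hle : 0 ≤ (q 4)^2 / g4 hi := div_nonneg (sq_nonneg (q 4)) h4.le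
    simp only [hh, hg5, hhi]; linarith
  have hmem : (0:ℝ) ∈ Set.Icc (h hi) (h lo) := ⟨hhhi, hhlo⟩
  obtain ⟨c0, hc0mem, hc0⟩ := intermediate_value_Icc' hlohi hch hmem
  have hc0lo : lo ≤ c0 := hc0mem.1
  have hg5c0 : g5 c0 = c0 := by
    have : g5 c0 - c0 = 0 := hc0
    linarith
  refine ⟨![c0, g1 c0, g2 c0, g3 c0, g4 c0], ?_, ?_⟩
  · intro j
    fin_cases j
    · simpa using lt_of_lt_of_le (hp 0) hc0lo
    · simpa using lt_of_lt_of_le (hp 1) (b1 c0 hc0lo).1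
    · simpa using lt_of_lt_of_le (hp 2) (b2 c0 hc0lo).1
    · simpa using lt_of_lt_of_le (hp 3) (b3 c0 hc0lo).1
    · simpa using lt_of_lt_of_le (hp 4) (b4 c0 hc0lo).1
  · intro j
    fin_cases j
    · simp [hg1]
    · simp [hg2]
    · simp [hg3]
    · simp [hg4]
    · simpa [hg5] using hg5c0.symm

lemma detB (y : Fin 5 → ℝ) : (Bmat y).det = 2 + 2 * (y 0 * y 1 * y 2 * y 3 * y 4) := by
  simp [Bmat, Matrix.det_succ_row_zero, Fin.sum_univ_succ, Fin.succAbove]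
  ring

section Easy
variable {d y z : Fin 5 → ℝ}

lemma Bnn (hy : ∀ i, 0 < y i) : ∀ i j, 0 ≤ Bmat y i j := by
  have h0 := (hy 0).le; have h1 := (hy 1).le; have h2 := (hy 2).le
  have h3 := (hy 3).le; have h4 := (hy 4).le
  intro i j; fin_cases i <;> fin_cases j <;> simp [Bmat, Matrix.vecHead, Matrix.vecTail] <;> linarith

lemma Xnn (hd : ∀ i, 0 < d i) (hy : ∀ i, 0 < y i) (hz : ∀ i, 0 < z i) : ∀ i j, 0 ≤ (diagonal d * Bmat y * diagonal z) i j := by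
  intro i j
  rw [Matrix.mul_diagonal, Matrix.diagonal_mul]
  exact mul_nonneg (mul_nonneg (hd i).le (Bnn hy i j)) (hz j).le

lemma detX (hd : ∀ i, 0 < d i) (hy : ∀ i, 0 < y i) (hz : ∀ i, 0 < z i) : (diagonal d * Bmat y * diagonal z).det ≠ 0 := by
  rw [Matrix.det_mul, Matrix.det_mul, Matrix.det_diagonal, Matrix.det_diagonal, detB]
  have : 0 < ∏ i, d i := Finset.prod_pos (fun i _ => hd i)
  have : 0 < ∏ i, z i := Finset.prod_pos (fun i _ => hz i)
  have : 0 < 2 + 2 * (y 0 * y 1 * y 2 * y 3 * y 4) := by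
    have := hy 0; have := hy 1; have := hy 2; have := hy 3; have := hy 4; positivity
  positivity

set_option maxRecDepth 10000 in
lemma XXtPosDef (hd : ∀ i, 0 < d i) (hy : ∀ i, 0 < y i) (hz : ∀ i, 0 < z i) : ((diagonal d * Bmat y * diagonal z) *
    (diagonal d * Bmat y * diagonal z)ᵀ).PosDef := by
  set X := diagonal d * Bmat y * diagonal z with hX
  refine Matrix.PosDef.of_dotProduct_mulVec_pos ?_ ?_
  · show (X * Xᵀ)ᴴ = X * Xᵀ
    rw [Matrix.conjTranspose_eq_transpose_of_trivial, Matrix.transpose_mul,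
      Matrix.transpose_transpose]
  · intro x hx
    have hXt : Function.Injective (Xᵀ).mulVec := by
      rw [Matrix.mulVec_injective_iff_isUnit, Matrix.isUnit_iff_isUnit_det,
        Matrix.det_transpose, isUnit_iff_ne_zero]
      exact detX hd hy hz
    have hne : Xᵀ *ᵥ x ≠ 0 := by
      intro h
      apply hx
      have := hXt (a₁ := x) (a₂ := 0) (by simpa using h)
      simpa using this
    have : star x ⬝ᵥ ((X * Xᵀ) *ᵥ x) = (Xᵀ *ᵥ x) ⬝ᵥ (Xᵀ *ᵥ x) := by
      rw [← Matrix.mulVec_mulVec, Matrix.dotProduct_mulVec, ← Matrix.mulVec_transpose]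
      simp
    rw [this]
    have h2 : 0 ≤ (Xᵀ *ᵥ x) ⬝ᵥ (Xᵀ *ᵥ x) :=
      Finset.sum_nonneg fun i _ => mul_self_nonneg _
    rcases h2.lt_or_eq with h | h
    · exact h
    · exact absurd ((dotProduct_self_eq_zero).mp h.symm) hne

lemma entriesPos (hd : ∀ i, 0 < d i) (hy : ∀ i, 0 < y i) (hz : ∀ i, 0 < z i) : ∀ i j, 0 < ((diagonal d * Bmat y * diagonal z) *
    (diagonal d * Bmat y * diagonal z)ᵀ) i j := by
  intro i j
  set X := diagonal d * Bmat y * diagonal z with hX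
  have hXe : ∀ i j, X i j = d i * Bmat y i j * z j := by
    intro i j; rw [hX, Matrix.mul_diagonal, Matrix.diagonal_mul]
  have hwit : ∀ i j : Fin 5, ∃ k, 0 < Bmat y i k * Bmat y j k := by
    have h0 := hy 0; have h1 := hy 1; have h2 := hy 2; have h3 := hy 3; have h4 := hy 4
    intro i j
    fin_cases i <;> fin_cases j
    exact ⟨0, by simp [Bmat]⟩; exact ⟨0, by simp [Bmat]; nlinarith⟩;
    exact ⟨0, by simp [Bmat]; nlinarith⟩; exact ⟨3, by simp [Bmat]; nlinarith⟩;
    exact ⟨3, by simp [Bmat]; nlinarith⟩;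
    exact ⟨0, by simp [Bmat]; nlinarith⟩; exact ⟨1, by simp [Bmat]⟩;
    exact ⟨0, by simp [Bmat]; nlinarith⟩; exact ⟨1, by simp [Bmat]; nlinarith⟩;
    exact ⟨4, by simp [Bmat]; nlinarith⟩;
    exact ⟨0, by simp [Bmat]; nlinarith⟩; exact ⟨0, by simp [Bmat]; nlinarith⟩;
    exact ⟨2, by simp [Bmat]⟩; exact ⟨1, by simp [Bmat]; nlinarith⟩;
    exact ⟨2, by simp [Bmat]; nlinarith⟩;
    exact ⟨3, by simp [Bmat]; nlinarith⟩; exact ⟨1, by simp [Bmat]; nlinarith⟩;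
    exact ⟨1, by simp [Bmat]; nlinarith⟩; exact ⟨3, by simp [Bmat]⟩;
    exact ⟨2, by simp [Bmat]; nlinarith⟩;
    exact ⟨3, by simp [Bmat]; nlinarith⟩; exact ⟨4, by simp [Bmat]; nlinarith⟩;
    exact ⟨2, by simp [Bmat]; nlinarith⟩; exact ⟨2, by simp [Bmat]; nlinarith⟩;
    exact ⟨4, by simp [Bmat]⟩
  obtain ⟨k0, hk0⟩ := hwit i j
  rw [Matrix.mul_apply]
  apply Finset.sum_pos'
  · intro k _
    rw [Matrix.transpose_apply]
    exact mul_nonneg (Xnn hd hy hz i k) (Xnn hd hy hz j k)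
  · refine ⟨k0, Finset.mem_univ _, ?_⟩
    rw [Matrix.transpose_apply, hXe, hXe]
    nlinarith [mul_pos (mul_pos (mul_pos (hd i) (hd j)) (mul_pos (hz k0) (hz k0))) hk0]
end Easy

lemma BtHB_diag (y : Fin 5 → ℝ) : ∀ i, ((Bmat y)ᵀ * Horn * Bmat y) i i = 0 := by
  intro i
  fin_cases i <;>
    simp [Matrix.mul_apply, Fin.sum_univ_five, Bmat, Horn, Matrix.vecHead, Matrix.vecTail] <;>
    ring_nf <;> simp

lemma trace_zero (d y z : Fin 5 → ℝ) (hd : ∀ i, d i ≠ 0) :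
    Matrix.trace (((diagonal d * Bmat y * diagonal z) * (diagonal d * Bmat y * diagonal z)ᵀ)ᵀ *
      (diagonal (fun i => (d i)⁻¹) * Horn * diagonal (fun i => (d i)⁻¹))) = 0 := by
  set B := Bmat y with hB
  set Dd := diagonal d with hDd
  set Dz := diagonal z with hDz
  set Di : Matrix (Fin 5) (Fin 5) ℝ := diagonal (fun i => (d i)⁻¹) with hDi
  have hDiDd : Di * Dd = 1 := by
    rw [hDi, hDd, Matrix.diagonal_mul_diagonal,
      show (fun i => (d i)⁻¹ * d i) = fun _ => (1:ℝ) from funext fun i => inv_mul_cancel₀ (hd i)]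
    exact Matrix.diagonal_one
  have hDdDi : Dd * Di = 1 := by
    rw [hDi, hDd, Matrix.diagonal_mul_diagonal,
      show (fun i => d i * (d i)⁻¹) = fun _ => (1:ℝ) from funext fun i => mul_inv_cancel₀ (hd i)]
    exact Matrix.diagonal_one
  have hcan1 : ∀ M : Matrix (Fin 5) (Fin 5) ℝ, Dd * (Di * M) = M := fun M => by
    rw [← Matrix.mul_assoc, hDdDi, Matrix.one_mul]
  have hcan2 : ∀ M : Matrix (Fin 5) (Fin 5) ℝ, Di * (Dd * M) = M := fun M => by
    rw [← Matrix.mul_assoc, hDiDd, Matrix.one_mul]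
  have hXt : (Dd * B * Dz)ᵀ = Dz * Bᵀ * Dd := by
    rw [Matrix.transpose_mul, Matrix.transpose_mul, hDz, hDd, Matrix.diagonal_transpose,
      Matrix.diagonal_transpose, Matrix.mul_assoc]
  have hAt : ((Dd * B * Dz) * (Dd * B * Dz)ᵀ)ᵀ = (Dd * B * Dz) * (Dz * Bᵀ * Dd) := by
    rw [Matrix.transpose_mul, Matrix.transpose_transpose, hXt]
  rw [hAt]
  rw [show (Dd * B * Dz) * (Dz * Bᵀ * Dd) * (Di * Horn * Di)
      = (Dd * B * Dz) * ((Dz * Bᵀ * Dd) * (Di * Horn * Di)) from Matrix.mul_assoc _ _ _,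
    Matrix.trace_mul_comm]
  simp only [Matrix.mul_assoc]
  rw [hcan1, hcan2]
  rw [Matrix.trace_mul_comm]
  simp only [Matrix.mul_assoc]
  rw [show Dz * Dz = diagonal (fun i => z i * z i) from Matrix.diagonal_mul_diagonal z z]
  have hdiag : ∀ i : Fin 5, (Bᵀ * (Horn * (B * diagonal (fun i => z i * z i)))) i i = 0 := by
    intro i
    rw [show Bᵀ * (Horn * (B * diagonal (fun i => z i * z i)))
        = (Bᵀ * Horn * B) * diagonal (fun i => z i * z i) by
      simp only [Matrix.mul_assoc]]
    rw [Matrix.mul_diagonal, hB, BtHB_diag, zero_mul]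
  rw [Matrix.trace]
  exact Finset.sum_eq_zero fun i _ => hdiag i

lemma trace_eq_sumQ {κ : ℕ} (Bm : Matrix (Fin 5) (Fin κ) ℝ) (d : Fin 5 → ℝ) :
    Matrix.trace ((Bm * Bmᵀ)ᵀ * (diagonal d * Horn * diagonal d))
      = ∑ k : Fin κ, Qform (fun i => d i * Bm i k) := by
  have hAt : (Bm * Bmᵀ)ᵀ = Bm * Bmᵀ := by
    rw [Matrix.transpose_mul, Matrix.transpose_transpose]
  rw [hAt, Matrix.mul_assoc, Matrix.trace_mul_comm, Matrix.trace]
  set N := diagonal d * Horn * diagonal d with hNdef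
  have hN : ∀ a b, N a b = d a * Horn a b * d b := by
    intro a b
    rw [hNdef, Matrix.mul_diagonal, Matrix.diagonal_mul]
  apply Finset.sum_congr rfl
  intro k _
  simp only [Matrix.diag_apply, Matrix.mul_apply, Matrix.transpose_apply, hN, Qform]
  rw [Finset.sum_comm]
  apply Finset.sum_congr rfl
  intro i _
  rw [Finset.sum_mul]
  apply Finset.sum_congr rfl
  intro j _
  ring

lemma uprod (i j : Fin 5) (a b : ℝ) :
    (a * uvec i j + b * uvec (i+1) j) * (a * uvec i (j+2) + b * uvec (i+1) (j+2))
      = if i = j then a * b else 0 := by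
  fin_cases i <;> fin_cases j <;> simp [uvec] <;> ring

lemma Bmat_eq_uvec (y : Fin 5 → ℝ) (l j : Fin 5) :
    Bmat y l j = uvec j l + y j * uvec (j+1) l := by
  fin_cases l <;> fin_cases j <;> simp [Bmat, uvec, Matrix.vecHead, Matrix.vecTail] <;> ring

lemma hard {κ : ℕ} (Bm : Matrix (Fin 5) (Fin κ) ℝ) (hBnn : ∀ i k, 0 ≤ Bm i k)
    (d : Fin 5 → ℝ) (hd : ∀ i, 0 < d i)
    (hQ0 : ∀ k, Qform (fun i => d i * Bm i k) = 0)
    (hApos : ∀ i j, 0 < (Bm * Bmᵀ) i j) :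
    ∃ X ∈ ZHorn, Bm * Bmᵀ = X * Xᵀ := by
  classical
  set w : Fin κ → Fin 5 → ℝ := fun k i => d i * Bm i k with hwdef
  have hwnn : ∀ k i, 0 ≤ w k i := fun k i => mul_nonneg (hd i).le (hBnn i k)
  choose I al be hal hbe hrep using fun k => classify (w k) (hwnn k) (hQ0 k)
  set p : Fin 5 → ℝ := fun j => ∑ k, if I k = j then (al k)^2 else 0 with hpdef
  set r : Fin 5 → ℝ := fun j => ∑ k, if I k = j then (be k)^2 else 0 with hrdef
  set q : Fin 5 → ℝ := fun j => ∑ k, if I k = j then al k * be k else 0 with hqdef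
  set M : Fin 5 → Fin 5 → ℝ := fun l m => d l * ((Bm * Bmᵀ) l m) * d m with hMdef
  have hM : ∀ l m, M l m = ∑ k, w k l * w k m := by
    intro l m
    rw [hMdef]
    simp only [Matrix.mul_apply, Matrix.transpose_apply]
    rw [Finset.mul_sum, Finset.sum_mul]
    apply Finset.sum_congr rfl
    intro k _
    simp only [hwdef]
    ring
  -- the structured form of M
  have hM2 : ∀ l m, M l m = ∑ j : Fin 5,
      (p j * (uvec j l * uvec j m)
        + q j * (uvec j l * uvec (j+1) m + uvec (j+1) l * uvec j m)
        + r j * (uvec (j+1) l * uvec (j+1) m)) := by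
    intro l m
    rw [hM]
    have step1 : ∀ k, w k l * w k m = ∑ j : Fin 5, (if I k = j then
        ((al k)^2 * (uvec j l * uvec j m)
          + (al k * be k) * (uvec j l * uvec (j+1) m + uvec (j+1) l * uvec j m)
          + (be k)^2 * (uvec (j+1) l * uvec (j+1) m)) else 0) := by
      intro k
      rw [Finset.sum_ite_eq, if_pos (Finset.mem_univ _)]
      rw [hrep k l, hrep k m]
      ring
    rw [Finset.sum_congr rfl (fun k _ => step1 k), Finset.sum_comm]
    apply Finset.sum_congr rfl
    intro j _
    rw [hpdef, hqdef, hrdef]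
    simp only [Finset.sum_mul, Finset.mul_sum, ← Finset.sum_add_distrib]
    apply Finset.sum_congr rfl
    intro k _
    by_cases h : I k = j <;> simp [h] <;> ring
  -- q j = M j (j+2)
  have hqM : ∀ j, q j = M j (j+2) := by
    intro j
    rw [hM, hqdef]
    apply Finset.sum_congr rfl
    intro k _
    rw [hrep k j, hrep k (j+2), uprod]
  have hqpos : ∀ j, 0 < q j := by
    intro j
    rw [hqM j, hMdef]
    have := hApos j (j+2)
    have := hd j; have := hd (j+2)
    positivity
  have hcs : ∀ j, (q j)^2 ≤ p j * r j := by
    intro j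
    have h1 : q j = ∑ k, (if I k = j then al k else 0) * (if I k = j then be k else 0) := by
      simp only [hqdef]
      apply Finset.sum_congr rfl
      intro k _
      by_cases h : I k = j <;> simp [h]
    have h2 : p j = ∑ k, (if I k = j then al k else 0) ^ 2 := by
      simp only [hpdef]
      apply Finset.sum_congr rfl
      intro k _
      by_cases h : I k = j <;> simp [h]
    have h3 : r j = ∑ k, (if I k = j then be k else 0) ^ 2 := by
      simp only [hrdef]
      apply Finset.sum_congr rfl
      intro k _
      by_cases h : I k = j <;> simp [h]
    rw [h1, h2, h3]
    exact Finset.sum_mul_sq_le_sq_mul_sq _ _ _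
  have hppos : ∀ j, 0 < p j := by
    intro j
    have h0 : 0 ≤ p j := Finset.sum_nonneg fun k _ => by
      by_cases h : I k = j <;> simp [h, sq_nonneg]
    rcases h0.lt_or_eq with h | h
    · exact h
    · exfalso
      have h1 := hcs j
      rw [← h, zero_mul] at h1
      nlinarith [hqpos j]
  have hrpos : ∀ j, 0 < r j := by
    intro j
    have h0 : 0 ≤ r j := Finset.sum_nonneg fun k _ => by
      by_cases h : I k = j <;> simp [h, sq_nonneg]
    rcases h0.lt_or_eq with h | h
    · exact h
    · exfalso
      have h1 := hcs j
      rw [← h, mul_zero] at h1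
      nlinarith [hqpos j]
  obtain ⟨c, hcpos, hcrec⟩ := exists_c p r q hppos hrpos hcs
  set y : Fin 5 → ℝ := fun j => q j / c j with hydef
  have hypos : ∀ j, 0 < y j := fun j => div_pos (hqpos j) (hcpos j)
  have hyq : ∀ j, c j * y j = q j := by
    intro j
    rw [hydef]
    exact mul_div_cancel₀ _ (hcpos j).ne'
  have hres : ∀ j, c (j+1) + c j * (y j)^2 = p (j+1) + r j := by
    intro j
    have h1 := hcrec j
    have h2 : c j * (y j)^2 = (q j)^2 / c j := by
      have hc := (hcpos j).ne'
      rw [hydef]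
      field_simp
    rw [h2]
    linarith
  -- the main pointwise identity
  have main : ∀ l m, M l m = ∑ j : Fin 5, (Bmat y l j * Bmat y m j * c j) := by
    intro l m
    rw [hM2 l m]
    simp only [Bmat_eq_uvec]
    rw [Fin.sum_univ_five, Fin.sum_univ_five]
    simp only [show ((0:Fin 5)+1) = 1 from rfl, show ((1:Fin 5)+1) = 2 from rfl,
      show ((2:Fin 5)+1) = 3 from rfl, show ((3:Fin 5)+1) = 4 from rfl,
      show ((4:Fin 5)+1) = 0 from rfl]
    have e0 := hres 0; have e1 := hres 1; have e2 := hres 2; have e3 := hres 3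
    have e4 := hres 4
    have g0 := hyq 0; have g1 := hyq 1; have g2 := hyq 2; have g3 := hyq 3
    have g4 := hyq 4
    simp only [show ((0:Fin 5)+1) = 1 from rfl, show ((1:Fin 5)+1) = 2 from rfl,
      show ((2:Fin 5)+1) = 3 from rfl, show ((3:Fin 5)+1) = 4 from rfl,
      show ((4:Fin 5)+1) = 0 from rfl] at e0 e1 e2 e3 e4
    linear_combination
      (-(uvec 1 l * uvec 1 m)) * e0 + (-(uvec 2 l * uvec 2 m)) * e1 +
      (-(uvec 3 l * uvec 3 m)) * e2 + (-(uvec 4 l * uvec 4 m)) * e3 +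
      (-(uvec 0 l * uvec 0 m)) * e4 +
      (-(uvec 0 l * uvec 1 m + uvec 1 l * uvec 0 m)) * g0 +
      (-(uvec 1 l * uvec 2 m + uvec 2 l * uvec 1 m)) * g1 +
      (-(uvec 2 l * uvec 3 m + uvec 3 l * uvec 2 m)) * g2 +
      (-(uvec 3 l * uvec 4 m + uvec 4 l * uvec 3 m)) * g3 +
      (-(uvec 4 l * uvec 0 m + uvec 0 l * uvec 4 m)) * g4
  -- build X
  refine ⟨diagonal (fun i => (d i)⁻¹) * Bmat y * diagonal (fun j => Real.sqrt (c j)),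
    ⟨fun i => (d i)⁻¹, y, fun j => Real.sqrt (c j),
      fun i => inv_pos.2 (hd i), hypos, fun j => Real.sqrt_pos.2 (hcpos j), rfl⟩, ?_⟩
  set X := diagonal (fun i => (d i)⁻¹) * Bmat y * diagonal (fun j => Real.sqrt (c j)) with hX
  have hXe : ∀ l j, X l j = (d l)⁻¹ * Bmat y l j * Real.sqrt (c j) := by
    intro l j
    rw [hX, Matrix.mul_diagonal, Matrix.diagonal_mul]
  ext l m
  have h1 : (X * Xᵀ) l m = (d l)⁻¹ * (d m)⁻¹ * (∑ j, Bmat y l j * Bmat y m j * c j) := by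
    rw [Matrix.mul_apply, Finset.mul_sum]
    apply Finset.sum_congr rfl
    intro j _
    rw [Matrix.transpose_apply, hXe, hXe]
    have hs : Real.sqrt (c j) * Real.sqrt (c j) = c j := Real.mul_self_sqrt (hcpos j).le
    linear_combination ((d l)⁻¹ * (d m)⁻¹ * Bmat y l j * Bmat y m j) * hs
  rw [h1, ← main l m, hMdef]
  have hdl := (hd l).ne'
  have hdm := (hd m).ne'
  field_simp

end Aux

/-- the Horn locus is the image of `Z_Horn` under the map `X ↦ XXᵀ`. -/
theorem horn_locus_eq_image (A : Matrix (Fin 5) (Fin 5) ℝ) (hA : A.IsSymm) :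
    ((∃ (k : ℕ) (B : Matrix (Fin 5) (Fin k) ℝ), (∀ i j, 0 ≤ B i j) ∧ A = B * Bᵀ) ∧
      A.PosDef ∧ (∀ i j, 0 < A i j) ∧
      (∃ d : Fin 5 → ℝ, (∀ i, 0 < d i) ∧
        Matrix.trace (Aᵀ * (diagonal d * Horn * diagonal d)) = 0)) ↔
    ∃ X ∈ ZHorn, A = X * Xᵀ := by
  constructor
  · rintro ⟨⟨κ, Bm, hBnn, hAeq⟩, _hPD, hApos, d, hdpos, htr⟩
    subst hAeq
    rw [trace_eq_sumQ] at htr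
    have hQ0 : ∀ k, Qform (fun i => d i * Bm i k) = 0 := by
      have hnn : ∀ k ∈ Finset.univ, 0 ≤ Qform (fun i => d i * Bm i k) := fun k _ =>
        Qnonneg _ (fun i => mul_nonneg (hdpos i).le (hBnn i k))
      intro k
      exact (Finset.sum_eq_zero_iff_of_nonneg hnn).mp htr k (Finset.mem_univ k)
    exact hard Bm hBnn d hdpos hQ0 hApos
  · rintro ⟨X, ⟨d, y, z, hd, hy, hz, hXeq⟩, hAX⟩
    subst hXeq
    refine ⟨⟨5, _, Xnn hd hy hz, hAX⟩, ?_, ?_, ?_⟩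
    · rw [hAX]; exact XXtPosDef hd hy hz
    · rw [hAX]; exact entriesPos hd hy hz
    · exact ⟨fun i => (d i)⁻¹, fun i => inv_pos.2 (hd i),
        by rw [hAX]; exact trace_zero d y z (fun i => (hd i).ne')⟩
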